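/- arXiv:2501.14912 — 5 statements merged into one kernel-verified Lean document; each statement's English description precedes it below -/
import Mathlib

section
/- Let n be a natural number, α > 0 a real number, and v ∈ ℝ^n. Define L : ℝ^n × ℝ^n → ℝ by L(u, λ) = (α/2)‖u‖² + ⟨λ, v − u⟩. Then, with values taken in the extended reals (EReal), the infimum over u in the nonnegative orthant of the supremum over λ in the nonnegative orthant of L(u, λ) equals the supremum over λ in the nonnegative orthant of the infimum over u in the nonnegative orthant of L(u, λ). (Strong duality of Proposition 1, for a fixed parameter θ with v = g(θ) − ε.) -/
open scoped RealInnerProductSpace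

/-- Strong duality (Proposition 1, first equality) for the inner min-max over slacks and
multipliers: with `L (u, λ) = (α/2)‖u‖² + ⟪λ, v − u⟫`, the inf over the nonnegative orthant
of the sup over the nonnegative orthant equals the sup of the inf, in the extended reals. -/
theorem rfl_inner_strong_duality (n : ℕ) (α : ℝ) (hα : 0 < α)
    (v : EuclideanSpace ℝ (Fin n)) :
    (⨅ u : {u : EuclideanSpace ℝ (Fin n) // ∀ i, 0 ≤ u i},
      ⨆ l : {l : EuclideanSpace ℝ (Fin n) // ∀ i, 0 ≤ l i},
        ((α / 2 * ‖u.1‖ ^ 2 + ⟪l.1, v - u.1⟫ : ℝ) : EReal)) =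
    (⨆ l : {l : EuclideanSpace ℝ (Fin n) // ∀ i, 0 ≤ l i},
      ⨅ u : {u : EuclideanSpace ℝ (Fin n) // ∀ i, 0 ≤ u i},
        ((α / 2 * ‖u.1‖ ^ 2 + ⟪l.1, v - u.1⟫ : ℝ) : EReal)) := by
  set w : EuclideanSpace ℝ (Fin n) := WithLp.toLp 2 (fun i => max (v i) 0) with hw_def
  have hw : ∀ i, 0 ≤ w i := fun i => le_max_right _ _
  have hαw : ∀ i, 0 ≤ (α • w) i := by
    intro i
    simpa using mul_nonneg hα.le (hw i)
  -- ⟪w, v⟫ = ‖w‖²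
  have hwv : ⟪w, v⟫ = ‖w‖ ^ 2 := by
    rw [← real_inner_self_eq_norm_sq]
    simp only [PiLp.inner_apply, RCLike.inner_apply, conj_trivial]
    apply Finset.sum_congr rfl
    intro i _
    show v i * max (v i) 0 = max (v i) 0 * max (v i) 0
    rcases le_or_gt (v i) 0 with h | h
    · rw [max_eq_right h]; ring
    · rw [max_eq_left h.le]
  set C : EReal := ((α / 2 * ‖w‖ ^ 2 : ℝ) : EReal) with hC
  refine le_antisymm ?_ ?_
  · -- inf sup ≤ C ≤ sup inf
    have h1 : (⨅ u : {u : EuclideanSpace ℝ (Fin n) // ∀ i, 0 ≤ u i},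
        ⨆ l : {l : EuclideanSpace ℝ (Fin n) // ∀ i, 0 ≤ l i},
          ((α / 2 * ‖u.1‖ ^ 2 + ⟪l.1, v - u.1⟫ : ℝ) : EReal)) ≤ C := by
      refine le_trans (iInf_le _ ⟨w, hw⟩) (iSup_le fun l => ?_)
      rw [hC, EReal.coe_le_coe_iff]
      have hneg : ⟪l.1, v - w⟫ ≤ 0 := by
        simp only [PiLp.inner_apply, RCLike.inner_apply, conj_trivial]
        apply Finset.sum_nonpos
        intro i _
        have : (v - w) i ≤ 0 := by
          show v i - max (v i) 0 ≤ 0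
          simp [le_max_left]
        exact mul_nonpos_of_nonpos_of_nonneg this (l.2 i)
      linarith
    have h2 : C ≤ (⨆ l : {l : EuclideanSpace ℝ (Fin n) // ∀ i, 0 ≤ l i},
        ⨅ u : {u : EuclideanSpace ℝ (Fin n) // ∀ i, 0 ≤ u i},
          ((α / 2 * ‖u.1‖ ^ 2 + ⟪l.1, v - u.1⟫ : ℝ) : EReal)) := by
      refine le_iSup_of_le (⟨α • w, hαw⟩ :
        {l : EuclideanSpace ℝ (Fin n) // ∀ i, 0 ≤ l i}) (le_iInf fun u => ?_)
      rw [hC, EReal.coe_le_coe_iff]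
      have hexp : ⟪α • w, v - u.1⟫ = α * (⟪w, v⟫ - ⟪w, u.1⟫) := by
        rw [real_inner_smul_left, inner_sub_right]
      have hsq : ‖u.1 - w‖ ^ 2 = ‖u.1‖ ^ 2 - 2 * ⟪u.1, w⟫ + ‖w‖ ^ 2 :=
        norm_sub_sq_real u.1 w
      have hsym : ⟪u.1, w⟫ = ⟪w, u.1⟫ := real_inner_comm _ _
      have hnn : 0 ≤ ‖u.1 - w‖ ^ 2 := sq_nonneg _
      rw [hexp, hwv]
      nlinarith [hα.le]
    exact h1.trans h2
  · -- weak duality: sup inf ≤ inf sup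
    refine iSup_le fun l => le_iInf fun u => ?_
    exact le_iSup_of_le l (iInf_le _ u)
end

section
/- Let n be a natural number, α > 0 a real number, and v ∈ ℝ^n. Then the supremum over λ in the nonnegative orthant of ⟨λ, v⟩ − ‖λ‖²/(2α) equals (α/2)‖v₊‖², and this supremum is attained at λ = α·v₊, which lies in the nonnegative orthant. (Closed form of the regularized dual function appearing in Propositions 1 and 2.) -/
open scoped RealInnerProductSpace

/-- The positive part of a vector, taken componentwise. -/
noncomputable def posPart {n : ℕ} (v : EuclideanSpace ℝ (Fin n)) : EuclideanSpace ℝ (Fin n) :=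
  WithLp.toLp 2 (fun i => max (v i) 0)

lemma posPart_inner {n : ℕ} (v : EuclideanSpace ℝ (Fin n)) :
    ⟪posPart v, v⟫ = ‖posPart v‖ ^ 2 := by
  rw [← real_inner_self_eq_norm_sq]
  simp only [PiLp.inner_apply, RCLike.inner_apply, conj_trivial]
  apply Finset.sum_congr rfl
  intro i _
  unfold _root_.posPart
  simp only [WithLp.ofLp_toLp]
  rcases le_or_gt (v i) 0 with h | h
  · rw [max_eq_right h]; ring
  · rw [max_eq_left h.le]

/-- Closed form of the regularized dual function: the supremum over `λ` in the nonnegative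
orthant of `⟪λ, v⟫ − ‖λ‖²/(2α)` equals `(α/2)‖v₊‖²`, attained at `λ = α • v₊`, which lies
in the nonnegative orthant. -/
theorem regularized_dual_sup (n : ℕ) (α : ℝ) (hα : 0 < α) (v : EuclideanSpace ℝ (Fin n)) :
    IsGreatest ((fun l : EuclideanSpace ℝ (Fin n) => ⟪l, v⟫ - ‖l‖ ^ 2 / (2 * α)) ''
        {l : EuclideanSpace ℝ (Fin n) | ∀ i, 0 ≤ l i})
      (α / 2 * ‖posPart v‖ ^ 2) ∧
    (∀ i, 0 ≤ (α • posPart v) i) ∧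
    ⟪α • posPart v, v⟫ - ‖α • posPart v‖ ^ 2 / (2 * α) = α / 2 * ‖posPart v‖ ^ 2 := by
  have hmem : ∀ i, 0 ≤ (α • posPart v) i := by
    intro i
    simp only [PiLp.smul_apply, smul_eq_mul]
    unfold _root_.posPart
    exact mul_nonneg hα.le (le_max_right _ _)
  have hval : ⟪α • posPart v, v⟫ - ‖α • posPart v‖ ^ 2 / (2 * α)
      = α / 2 * ‖posPart v‖ ^ 2 := by
    rw [real_inner_smul_left, posPart_inner, norm_smul]
    rw [Real.norm_eq_abs, abs_of_pos hα]
    field_simp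
    ring
  refine ⟨⟨⟨α • posPart v, hmem, hval⟩, ?_⟩, hmem, hval⟩
  rintro x ⟨l, hl, rfl⟩
  simp only
  have h1 : ⟪l, v⟫ ≤ ⟪l, posPart v⟫ := by
    simp only [PiLp.inner_apply, RCLike.inner_apply, conj_trivial]
    apply Finset.sum_le_sum
    intro i _
    exact mul_le_mul_of_nonneg_right (le_max_left _ _) (hl i)
  have h2 : ⟪l, posPart v⟫ ≤ ‖l‖ * ‖posPart v‖ := real_inner_le_norm _ _
  have h3 : ‖l‖ * ‖posPart v‖ - ‖l‖ ^ 2 / (2 * α) ≤ α / 2 * ‖posPart v‖ ^ 2 := by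
    have e : ‖l‖ ^ 2 / (2 * α) * (2 * α) = ‖l‖ ^ 2 :=
      div_mul_cancel₀ _ (by positivity)
    nlinarith [sq_nonneg (α * ‖posPart v‖ - ‖l‖), hα]
  linarith
end

section
/- Let n be a natural number, α > 0 a real number, and v ∈ ℝ^n. Then, in the extended reals, the infimum over u in the nonnegative orthant of the supremum over λ in the nonnegative orthant of (α/2)‖u‖² + ⟨λ, v − u⟩ equals (α/2)‖v₊‖². (The primal value of the Resilient Feasible Learning inner problem for a fixed parameter θ with v = g(θ) − ε.) -/
open scoped RealInnerProductSpace

lemma inner_sum' (n : ℕ) (x y : EuclideanSpace ℝ (Fin n)) :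
    ⟪x, y⟫ = ∑ i, x i * y i := by
  simp [PiLp.inner_apply, RCLike.inner_apply, conj_trivial]
  exact Finset.sum_congr rfl fun i _ => mul_comm _ _

lemma normsq_sum (n : ℕ) (x : EuclideanSpace ℝ (Fin n)) :
    ‖x‖ ^ 2 = ∑ i, (x i) ^ 2 := by
  rw [← real_inner_self_eq_norm_sq, inner_sum']
  simp [sq]

/-- Primal value of the Resilient Feasible Learning inner problem: in the extended reals,
the infimum over `u` in the nonnegative orthant of the supremum over `l` in the nonnegative
orthant of `(α/2)‖u‖² + ⟪l, v − u⟫` equals `(α/2)‖v₊‖²`. -/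
theorem rfl_inner_primal_value (n : ℕ) (α : ℝ) (hα : 0 < α)
    (v : EuclideanSpace ℝ (Fin n)) :
    (⨅ u : {u : EuclideanSpace ℝ (Fin n) // ∀ i, 0 ≤ u i},
      ⨆ l : {l : EuclideanSpace ℝ (Fin n) // ∀ i, 0 ≤ l i},
        ((α / 2 * ‖u.1‖ ^ 2 + ⟪l.1, v - u.1⟫ : ℝ) : EReal)) =
    ((α / 2 * ‖posPart v‖ ^ 2 : ℝ) : EReal) := by
  set c : ℝ := α / 2 * ‖posPart v‖ ^ 2 with hc
  have hvpos : ∀ i, 0 ≤ posPart v i := fun i => le_max_right _ _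
  apply le_antisymm
  · -- inf ≤ c : use u = v₊
    refine iInf_le_of_le ⟨posPart v, hvpos⟩ ?_
    refine iSup_le fun l => ?_
    rw [EReal.coe_le_coe_iff]
    have hin : ⟪l.1, v - posPart v⟫ ≤ 0 := by
      rw [inner_sum']
      apply Finset.sum_nonpos
      intro i _
      have h1 : (v - posPart v) i ≤ 0 := by
        have : posPart v i = max (v i) 0 := rfl
        simp only [PiLp.sub_apply, this]
        simp [le_max_left]
      exact mul_nonpos_of_nonneg_of_nonpos (l.2 i) h1
    linarith
  · -- c ≤ inf
    refine le_iInf fun u => ?_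
    by_cases h : ∀ i, v i ≤ u.1 i
    · -- take l = 0
      refine le_iSup_of_le ⟨0, fun i => le_refl 0⟩ ?_
      rw [EReal.coe_le_coe_iff]
      have hnorm : ‖posPart v‖ ^ 2 ≤ ‖u.1‖ ^ 2 := by
        rw [normsq_sum, normsq_sum]
        apply Finset.sum_le_sum
        intro i _
        have h1 : (0:ℝ) ≤ posPart v i := hvpos i
        have h2 : posPart v i ≤ u.1 i := by
          have : posPart v i = max (v i) 0 := rfl
          rw [this]
          exact max_le (h i) (u.2 i)
        nlinarith
      have : ⟪(0 : EuclideanSpace ℝ (Fin n)), v - u.1⟫ = 0 := inner_zero_left _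
      rw [this]
      have hα2 : (0:ℝ) ≤ α / 2 := by linarith
      nlinarith
    · push_neg at h
      obtain ⟨i, hi⟩ := h
      set d : ℝ := v i - u.1 i with hd
      have hdpos : 0 < d := by simp [hd]; linarith
      set t : ℝ := max 0 ((c - α / 2 * ‖u.1‖ ^ 2) / d) with ht
      have htpos : 0 ≤ t := le_max_left _ _
      have hl : ∀ j, 0 ≤ (EuclideanSpace.single i t : EuclideanSpace ℝ (Fin n)) j := by
        intro j
        rw [EuclideanSpace.single_apply]
        split <;> simp [htpos]
      refine le_iSup_of_le ⟨EuclideanSpace.single i t, hl⟩ ?_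
      rw [EReal.coe_le_coe_iff]
      have hin : ⟪(EuclideanSpace.single i t : EuclideanSpace ℝ (Fin n)), v - u.1⟫ = t * d := by
        rw [EuclideanSpace.inner_single_left]
        simp [hd]
      rw [hin]
      have h1 : (c - α / 2 * ‖u.1‖ ^ 2) / d ≤ t := le_max_right _ _
      have h2 : (c - α / 2 * ‖u.1‖ ^ 2) ≤ t * d := by
        rw [div_le_iff₀ hdpos] at h1
        linarith
      linarith
end

section
/- Let Θ be a nonempty type, n a natural number, g : Θ → ℝ^n, ε ∈ ℝ^n, and α > 0 a real number. Then, in the extended reals, the infimum over θ ∈ Θ and over u in the nonnegative orthant of the supremum over λ in the nonnegative orthant of (α/2)‖u‖² + ⟨λ, g(θ) − ε − u⟩ equals the infimum over θ ∈ Θ of (α/2)‖(g(θ) − ε)₊‖². (Proposition 2: the Resilient Feasible Learning problem equals ERM with a clamped-and-squared loss.) -/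
open scoped RealInnerProductSpace

/-- Proposition 2: the Resilient Feasible Learning problem equals ERM with a
clamped-and-squared loss. In the extended reals, the infimum over `θ` and over `u` in the
nonnegative orthant of the supremum over `λ` in the nonnegative orthant of
`(α/2)‖u‖² + ⟪λ, g(θ) − ε − u⟫` equals the infimum over `θ` of `(α/2)‖(g(θ) − ε)₊‖²`. -/
theorem rfl_equals_clamped_squared_erm (Θ : Type*) [Nonempty Θ] (n : ℕ)
    (g : Θ → EuclideanSpace ℝ (Fin n)) (ε : EuclideanSpace ℝ (Fin n))
    (α : ℝ) (hα : 0 < α) :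
    (⨅ θ : Θ, ⨅ u : {u : EuclideanSpace ℝ (Fin n) // ∀ i, 0 ≤ u i},
      ⨆ l : {l : EuclideanSpace ℝ (Fin n) // ∀ i, 0 ≤ l i},
        ((α / 2 * ‖u.1‖ ^ 2 + ⟪l.1, g θ - ε - u.1⟫ : ℝ) : EReal)) =
    ⨅ θ : Θ, ((α / 2 * ‖posPart (g θ - ε)‖ ^ 2 : ℝ) : EReal) := by
  refine iInf_congr fun θ => ?_
  set v : EuclideanSpace ℝ (Fin n) := g θ - ε with hv
  -- key facts
  have hinner : ∀ x y : EuclideanSpace ℝ (Fin n), ⟪x, y⟫ = ∑ i, x i * y i := by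
    intro x y
    simp [PiLp.inner_apply, RCLike.inner_apply, mul_comm]
  have hnormsq : ∀ x : EuclideanSpace ℝ (Fin n), ‖x‖ ^ 2 = ∑ i, x i ^ 2 := by
    intro x
    rw [← real_inner_self_eq_norm_sq, hinner]
    simp [sq]
  -- sup computation
  have hsup_le : ∀ u : {u : EuclideanSpace ℝ (Fin n) // ∀ i, 0 ≤ u i},
      (∀ i, v i ≤ u.1 i) →
      (⨆ l : {l : EuclideanSpace ℝ (Fin n) // ∀ i, 0 ≤ l i},
        ((α / 2 * ‖u.1‖ ^ 2 + ⟪l.1, v - u.1⟫ : ℝ) : EReal))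
        = ((α / 2 * ‖u.1‖ ^ 2 : ℝ) : EReal) := by
    intro u hu
    apply le_antisymm
    · refine iSup_le fun l => ?_
      refine EReal.coe_le_coe_iff.mpr ?_
      have : ⟪l.1, v - u.1⟫ ≤ 0 := by
        rw [hinner]
        apply Finset.sum_nonpos
        intro i _
        have : (v - u.1) i ≤ 0 := by
          have := hu i
          simpa [sub_nonpos] using this
        exact mul_nonpos_of_nonneg_of_nonpos (l.2 i) this
      linarith
    · have := le_iSup (fun l : {l : EuclideanSpace ℝ (Fin n) // ∀ i, 0 ≤ l i} =>
        ((α / 2 * ‖u.1‖ ^ 2 + ⟪l.1, v - u.1⟫ : ℝ) : EReal)) ⟨0, fun i => le_refl 0⟩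
      simpa using this
  have hsup_top : ∀ u : {u : EuclideanSpace ℝ (Fin n) // ∀ i, 0 ≤ u i},
      (¬ ∀ i, v i ≤ u.1 i) →
      (⨆ l : {l : EuclideanSpace ℝ (Fin n) // ∀ i, 0 ≤ l i},
        ((α / 2 * ‖u.1‖ ^ 2 + ⟪l.1, v - u.1⟫ : ℝ) : EReal)) = ⊤ := by
    intro u hu
    push_neg at hu
    obtain ⟨i, hi⟩ := hu
    have hd : 0 < (v - u.1) i := by
      simpa [sub_pos] using hi
    rw [iSup_eq_top]
    intro b hb
    obtain ⟨r, hbr, -⟩ := EReal.lt_iff_exists_real_btwn.mp hb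
    set t : ℝ := max 0 ((r - α / 2 * ‖u.1‖ ^ 2) / ((v - u.1) i)) with ht
    have ht0 : 0 ≤ t := le_max_left _ _
    refine ⟨⟨EuclideanSpace.single i t, fun j => ?_⟩, ?_⟩
    · rw [EuclideanSpace.single_apply]
      split <;> simp [ht0]
    · refine lt_of_lt_of_le hbr ?_
      refine EReal.coe_le_coe_iff.mpr ?_
      have hip : ⟪(EuclideanSpace.single i t : EuclideanSpace ℝ (Fin n)), v - u.1⟫
          = t * (v - u.1) i := by
        rw [real_inner_comm]
        simp [EuclideanSpace.inner_single_left, EuclideanSpace.inner_single_right]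
      rw [hip]
      have : (r - α / 2 * ‖u.1‖ ^ 2) ≤ t * (v - u.1) i := by
        calc (r - α / 2 * ‖u.1‖ ^ 2)
            = ((r - α / 2 * ‖u.1‖ ^ 2) / ((v - u.1) i)) * (v - u.1) i :=
              (div_mul_cancel₀ _ hd.ne').symm
          _ ≤ t * (v - u.1) i := by
              apply mul_le_mul_of_nonneg_right (le_max_right _ _) hd.le
      linarith
  -- conclude
  apply le_antisymm
  · have hfeas : ∀ i, (0:ℝ) ≤ posPart v i := fun i => le_max_right _ _
    refine le_trans (iInf_le _ ⟨posPart v, hfeas⟩) ?_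
    rw [hsup_le ⟨posPart v, hfeas⟩ (fun i => le_max_left _ _)]
  · refine le_iInf fun u => ?_
    by_cases h : ∀ i, v i ≤ u.1 i
    · rw [hsup_le u h]
      refine EReal.coe_le_coe_iff.mpr ?_
      have hnorm : ‖posPart v‖ ^ 2 ≤ ‖u.1‖ ^ 2 := by
        rw [hnormsq, hnormsq]
        apply Finset.sum_le_sum
        intro i _
        have h1 : 0 ≤ posPart v i := le_max_right _ _
        have h2 : posPart v i ≤ u.1 i := max_le (h i) (u.2 i)
        exact pow_le_pow_left₀ h1 h2 2
      have : 0 < α / 2 := by linarith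
      nlinarith
    · rw [hsup_top u h]
      exact le_top
end

section
/- Let Θ be a nonempty type, n a natural number, g : Θ → ℝ^n, ε ∈ ℝ^n, and α > 0 a real number. Then, in the extended reals, the supremum over λ in the nonnegative orthant of the infimum over u in the nonnegative orthant of (α/2)‖u‖² + ⟨λ, g(θ) − ε − u⟩ equals the supremum over λ in the nonnegative orthant of ⟨λ, g(θ) − ε⟩ − ‖λ‖²/(2α), for every θ ∈ Θ. (Second equality of Proposition 1: the RFL dual reduces to a quadratically regularized FL Lagrangian.) -/
open scoped RealInnerProductSpace

/-- Second equality of Proposition 1: for every `θ`, the RFL dual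
`sup_{λ ≥ 0} inf_{u ≥ 0} (α/2)‖u‖² + ⟪λ, g(θ) − ε − u⟫` reduces to the quadratically
regularized FL Lagrangian `sup_{λ ≥ 0} ⟪λ, g(θ) − ε⟫ − ‖λ‖²/(2α)`, in the extended reals. -/
theorem rfl_dual_equals_regularized_fl (Θ : Type*) [Nonempty Θ] (n : ℕ)
    (g : Θ → EuclideanSpace ℝ (Fin n)) (ε : EuclideanSpace ℝ (Fin n))
    (α : ℝ) (hα : 0 < α) (θ : Θ) :
    (⨆ l : {l : EuclideanSpace ℝ (Fin n) // ∀ i, 0 ≤ l i},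
      ⨅ u : {u : EuclideanSpace ℝ (Fin n) // ∀ i, 0 ≤ u i},
        ((α / 2 * ‖u.1‖ ^ 2 + ⟪l.1, g θ - ε - u.1⟫ : ℝ) : EReal)) =
    ⨆ l : {l : EuclideanSpace ℝ (Fin n) // ∀ i, 0 ≤ l i},
      ((⟪l.1, g θ - ε⟫ - ‖l.1‖ ^ 2 / (2 * α) : ℝ) : EReal) := by
  apply iSup_congr
  intro l
  set c := g θ - ε with hc
  apply le_antisymm
  · have hu : ∀ i, 0 ≤ (α⁻¹ • l.1) i := by
      intro i
      have := l.2 i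
      have : 0 ≤ α⁻¹ * l.1 i := mul_nonneg (inv_nonneg.mpr hα.le) this
      simpa [PiLp.smul_apply, smul_eq_mul] using this
    refine le_trans (iInf_le _ ⟨α⁻¹ • l.1, hu⟩) ?_
    apply EReal.coe_le_coe_iff.mpr
    have h1 : ‖α⁻¹ • l.1‖ ^ 2 = α⁻¹ ^ 2 * ‖l.1‖ ^ 2 := by
      rw [norm_smul]; simp [mul_pow]
    have h2 : ⟪l.1, c - α⁻¹ • l.1⟫ = ⟪l.1, c⟫ - α⁻¹ * ‖l.1‖ ^ 2 := by
      rw [inner_sub_right, real_inner_smul_right, real_inner_self_eq_norm_sq]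
    rw [h1, h2]
    have hα' : α ≠ 0 := hα.ne'
    apply le_of_eq
    field_simp
    ring
  · apply le_iInf
    intro u
    apply EReal.coe_le_coe_iff.mpr
    have h2 : ⟪l.1, c - u.1⟫ = ⟪l.1, c⟫ - ⟪l.1, u.1⟫ := inner_sub_right _ _ _
    have key : 0 ≤ α / 2 * ‖u.1 - α⁻¹ • l.1‖ ^ 2 :=
      mul_nonneg (by positivity) (sq_nonneg _)
    have hexp : ‖u.1 - α⁻¹ • l.1‖ ^ 2
        = ‖u.1‖ ^ 2 - 2 * (α⁻¹ * ⟪u.1, l.1⟫) + α⁻¹ ^ 2 * ‖l.1‖ ^ 2 := by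
      rw [norm_sub_sq_real, real_inner_smul_right, norm_smul]
      simp [mul_pow]
    have hsym : ⟪u.1, l.1⟫ = ⟪l.1, u.1⟫ := real_inner_comm _ _
    rw [hexp, hsym] at key
    have hα' : α ≠ 0 := hα.ne'
    rw [h2]
    have heq : α / 2 * (‖u.1‖ ^ 2 - 2 * (α⁻¹ * ⟪l.1, u.1⟫) + α⁻¹ ^ 2 * ‖l.1‖ ^ 2)
        = α / 2 * ‖u.1‖ ^ 2 - ⟪l.1, u.1⟫ + ‖l.1‖ ^ 2 / (2 * α) := by
      field_simp
    rw [heq] at key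
    linarith
end
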